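/- For n ≥ 6, the maximum number of edges in an intersecting 3-uniform hypergraph on n vertices is binomial(n-1, 2), attained by the full star. -/

import Mathlib

/-- Erdős–Ko–Rado for triple systems: for `n ≥ 6`, an intersecting 3-uniform
hypergraph on `n` vertices has at most `(n-1).choose 2` edges, and for every
vertex `x` the full star at `x` is intersecting and attains this bound. -/
theorem ekr_triple_systems {V : Type*} [Fintype V] [DecidableEq V] (n : ℕ)
    (hn : 6 ≤ n) (hcard : Fintype.card V = n) :
    (∀ H : Finset (Finset V),
      (∀ e ∈ H, e.card = 3) →
      (∀ e ∈ H, ∀ f ∈ H, (e ∩ f).Nonempty) →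
      H.card ≤ (n - 1).choose 2) ∧
    (∀ x : V,
      (∀ e ∈ (Finset.univ.powersetCard 3).filter (fun e => x ∈ e),
        ∀ f ∈ (Finset.univ.powersetCard 3).filter (fun e => x ∈ e),
        (e ∩ f).Nonempty) ∧
      ((Finset.univ.powersetCard 3).filter (fun e => x ∈ e)).card
        = (n - 1).choose 2) := by
  obtain ⟨φ⟩ : Nonempty (V ≃ Fin n) := ⟨Fintype.equivFinOfCardEq hcard⟩
  constructor
  · intro H h3 hint
    set 𝒜 : Finset (Finset (Fin n)) := H.image (fun s => s.image φ) with h𝒜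
    have hinj : Function.Injective (fun s : Finset V => s.image φ) := fun a b hab => by
      simpa [Finset.image_image, Equiv.symm_comp_self] using
        congrArg (fun t : Finset (Fin n) => t.image φ.symm) hab
    have hcard𝒜 : 𝒜.card = H.card := Finset.card_image_of_injective _ hinj
    have hI : (𝒜 : Set (Finset (Fin n))).Intersecting := by
      rintro a ha b hb
      simp only [h𝒜, Finset.coe_image, Set.mem_image, Finset.mem_coe] at ha hb
      obtain ⟨e, he, rfl⟩ := ha
      obtain ⟨f, hf, rfl⟩ := hb
      obtain ⟨v, hv⟩ := hint e he f hf
      simp only [Finset.mem_inter] at hv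
      exact fun hd => (Finset.disjoint_left.1 hd)
        (Finset.mem_image_of_mem φ hv.1) (Finset.mem_image_of_mem φ hv.2)
    have hS : (𝒜 : Set (Finset (Fin n))).Sized 3 := by
      rintro a ha
      simp only [h𝒜, Finset.coe_image, Set.mem_image, Finset.mem_coe] at ha
      obtain ⟨e, he, rfl⟩ := ha
      rw [Finset.card_image_of_injective _ φ.injective]
      exact h3 e he
    have := Finset.erdos_ko_rado hI hS (by omega)
    norm_num at this
    omega
  · intro x
    refine ⟨?_, ?_⟩
    · intro e he f hf
      simp only [Finset.mem_filter] at he hf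
      exact ⟨x, Finset.mem_inter.2 ⟨he.2, hf.2⟩⟩
    · have : ((Finset.univ.powersetCard 3).filter (fun e => x ∈ e)).card
          = ((Finset.univ.erase x).powersetCard 2).card := by
        apply Finset.card_nbij' (fun e => e.erase x) (fun s => insert x s)
        · intro e he
          simp only [Finset.mem_coe, Finset.mem_filter, Finset.mem_powersetCard] at he ⊢
          refine ⟨fun a ha => Finset.mem_erase.2
            ⟨(Finset.mem_erase.1 ha).1, Finset.mem_univ a⟩, ?_⟩
          rw [Finset.card_erase_of_mem he.2, he.1.2]
        · intro s hs
          simp only [Finset.mem_coe, Finset.mem_powersetCard, Finset.mem_filter] at hs ⊢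
          have hxs : x ∉ s := fun h => (Finset.mem_erase.1 (hs.1 h)).1 rfl
          exact ⟨⟨fun a _ => Finset.mem_univ a,
            by rw [Finset.card_insert_of_notMem hxs, hs.2]⟩, Finset.mem_insert_self _ _⟩
        · intro e he
          simp only [Finset.mem_coe, Finset.mem_filter] at he
          exact Finset.insert_erase he.2
        · intro s hs
          simp only [Finset.mem_coe, Finset.mem_powersetCard] at hs
          have hxs : x ∉ s := fun h => (Finset.mem_erase.1 (hs.1 h)).1 rfl
          exact Finset.erase_insert hxs
      rw [this, Finset.card_powersetCard, Finset.card_erase_of_mem (Finset.mem_univ x), Finset.card_univ, hcard]
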